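/- Suppose a = 0. Then the system (E0)–(Ek) holds on U: (E0) f_0'g − f_0·g' + 2f_0 = 0; (E1) f_1'g + f_1 = 0; (E2) −g'' + f_2'g + f_2·g' = 0; (Ek) f_k'g + (k−1)f_k·g' + (2−k)f_k = 0 for 3 ≤ k ≤ n−1, if and only if there exist real constants b_0', …, b_n' such that for all u ∈ U: f_k(u) = b_k'·|F(u)|^{(k−n)/(n−2)}·(F'(u))^{k−1} for each 0 ≤ k ≤ n with k ≠ 2, and f_2(u) = b_2'·F'(u)/F(u) − F''(u)/F'(u). -/

import Mathlib

open Filter Real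

/-- The function `g = ((n−2)F)/((n−1)F')`. -/
noncomputable def gFun (n : ℕ) (F : ℝ → ℝ) (u : ℝ) : ℝ :=
  (((n : ℝ) - 2) * F u) / (((n : ℝ) - 1) * deriv F u)

lemma constOn {U : Set ℝ} (hU : IsOpen U) (hUc : U.OrdConnected) {w : ℝ → ℝ}
    (hw : ∀ u ∈ U, HasDerivAt w 0 u) {x y : ℝ} (hx : x ∈ U) (hy : y ∈ U) : w x = w y := by
  have hconv : Convex ℝ U := hUc.convex
  refine hconv.is_const_of_fderivWithin_eq_zero
    (fun u hu => ((hw u hu).differentiableAt).differentiableWithinAt) (fun u hu => ?_) hx hy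
  rw [fderivWithin_of_isOpen hU hu, ((hw u hu).hasFDerivAt).fderiv]
  ext t; simp

lemma myAbsRpow {F : ℝ → ℝ} {u Q : ℝ} (hF : HasDerivAt F Q u) (hP : F u ≠ 0) (a : ℝ) :
    HasDerivAt (fun x => |F x| ^ a) (a * |F u| ^ a * Q / F u) u := by
  rcases hP.lt_or_gt with h | h
  · have hev : (fun x => |F x| ^ a) =ᶠ[nhds u] fun x => (-F x) ^ a := by
      have hlt : ∀ᶠ x in nhds u, F x < 0 :=
        hF.continuousAt.eventually_lt continuousAt_const h
      filter_upwards [hlt] with x hx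
      rw [abs_of_neg hx]
    have h1 : HasDerivAt (fun x => (-F x) ^ a) ((-Q) * a * (-F u) ^ (a - 1)) u :=
      (hF.neg).rpow_const (Or.inl (by simp; linarith))
    refine (hev.hasDerivAt_iff.mpr ?_)
    refine HasDerivAt.congr_deriv h1 ?_
    rw [abs_of_neg h, Real.rpow_sub_one (by linarith : -F u ≠ 0)]
    field_simp
  · have hev : (fun x => |F x| ^ a) =ᶠ[nhds u] fun x => (F x) ^ a := by
      have hlt : ∀ᶠ x in nhds u, 0 < F x :=
        continuousAt_const.eventually_lt hF.continuousAt h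
      filter_upwards [hlt] with x hx
      rw [abs_of_pos hx]
    have h1 : HasDerivAt (fun x => (F x) ^ a) (Q * a * (F u) ^ (a - 1)) u :=
      hF.rpow_const (Or.inl (by linarith))
    refine (hev.hasDerivAt_iff.mpr ?_)
    refine HasDerivAt.congr_deriv h1 ?_
    rw [abs_of_pos h, Real.rpow_sub_one (by linarith : F u ≠ 0)]
    field_simp

lemma myPhi {F : ℝ → ℝ} {u : ℝ} (hF : DifferentiableAt ℝ F u)
    (hF2 : DifferentiableAt ℝ (deriv F) u) (hP : F u ≠ 0) (hQ : deriv F u ≠ 0)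
    (a : ℝ) (m : ℤ) :
    HasDerivAt (fun x => |F x| ^ a * (deriv F x) ^ m)
      (|F u| ^ a * (deriv F u) ^ m *
        (a * deriv F u / F u + (m : ℝ) * deriv (deriv F) u / deriv F u)) u := by
  have h1 := myAbsRpow hF.hasDerivAt hP a
  have h2 : HasDerivAt (fun x => (deriv F x) ^ m)
      (((m : ℝ) * (deriv F u) ^ (m - 1)) * deriv (deriv F) u) u :=
    (hasDerivAt_zpow m _ (Or.inl hQ)).comp u hF2.hasDerivAt
  refine HasDerivAt.congr_deriv (h1.mul h2) ?_
  rw [zpow_sub_one₀ hQ]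
  field_simp

lemma myG {n : ℕ} {F : ℝ → ℝ} {u : ℝ} (hF : DifferentiableAt ℝ F u)
    (hF2 : DifferentiableAt ℝ (deriv F) u) (hQ : deriv F u ≠ 0) (h1 : ((n : ℝ) - 1) ≠ 0) :
    HasDerivAt (gFun n F)
      (((n : ℝ) - 2) / ((n : ℝ) - 1) *
        (1 - F u * deriv (deriv F) u / (deriv F u) ^ 2)) u := by
  have h := (hF.hasDerivAt.const_mul ((n : ℝ) - 2)).div
    (hF2.hasDerivAt.const_mul ((n : ℝ) - 1)) (by exact mul_ne_zero h1 hQ)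
  refine HasDerivAt.congr_deriv h ?_
  field_simp

lemma fwdKey (nR kR A B P Q R ψ g g' : ℝ) (hP : P ≠ 0) (hQ : Q ≠ 0)
    (h2 : nR - 2 ≠ 0) (h1 : nR - 1 ≠ 0)
    (hg : g * ((nR - 1) * Q) = (nR - 2) * P)
    (hg' : g' * ((nR - 1) * Q ^ 2) = (nR - 2) * (Q ^ 2 - P * R))
    (hE : A * g + (kR - 1) * B * g' + (2 - kR) * B = 0) :
    A * ψ + B * (ψ * ((nR - kR) / (nR - 2) * Q / P + (1 - kR) * R / Q)) = 0 := by
  have key : A * P * Q * (nR - 2) + B * (nR - kR) * Q ^ 2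
      + (1 - kR) * B * P * R * (nR - 2) = 0 := by
    linear_combination ((nR - 1) * Q ^ 2) * hE - (A * Q) * hg - ((kR - 1) * B) * hg'
  field_simp
  linear_combination ψ * key

lemma backKey (nR kR b P Q R ψ : ℝ) (hP : P ≠ 0) (hQ : Q ≠ 0)
    (h2 : nR - 2 ≠ 0) (h1 : nR - 1 ≠ 0) :
    (b * (ψ * ((kR - nR) / (nR - 2) * Q / P + (kR - 1) * R / Q))) *
        ((nR - 2) * P / ((nR - 1) * Q)) +
      (kR - 1) * (b * ψ) * ((nR - 2) / (nR - 1) * (1 - P * R / Q ^ 2)) +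
      (2 - kR) * (b * ψ) = 0 := by
  field_simp
  ring

lemma fwd2Key (nR C t P Q R g g' : ℝ) (hP : P ≠ 0) (hQ : Q ≠ 0)
    (h2 : nR - 2 ≠ 0) (h1 : nR - 1 ≠ 0)
    (hg : g * ((nR - 1) * Q) = (nR - 2) * P)
    (hg' : g' * ((nR - 1) * Q ^ 2) = (nR - 2) * (Q ^ 2 - P * R))
    (hE : t * g - g' = C) :
    t = (C * (nR - 1) / (nR - 2) + 1) * Q / P - R / Q := by
  have key : t * P * Q * (nR - 2) = C * (nR - 1) * Q ^ 2 + (nR - 2) * Q ^ 2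
      - (nR - 2) * P * R := by
    linear_combination ((nR - 1) * Q ^ 2) * hE - (t * Q) * hg + hg'
  field_simp
  linear_combination key

lemma back2Key (nR b P Q R S : ℝ) (hP : P ≠ 0) (hQ : Q ≠ 0)
    (h2 : nR - 2 ≠ 0) (h1 : nR - 1 ≠ 0) :
    -((nR - 2) / (nR - 1) * (0 - ((Q * R + P * S) * Q ^ 2 - P * R * (2 * Q ^ 1 * R)) / (Q ^ 2) ^ 2))
      + ((b * R * P - b * Q * Q) / P ^ 2 - (S * Q - R * R) / Q ^ 2) * ((nR - 2) * P / ((nR - 1) * Q))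
      + (b * Q / P - R / Q) * ((nR - 2) / (nR - 1) * (1 - P * R / Q ^ 2)) = 0 := by
  field_simp
  ring

theorem stmt10 (n : ℕ) (hn : 4 ≤ n)
    (U : Set ℝ) (hU : IsOpen U) (hUc : U.OrdConnected)
    (f : ℕ → ℝ → ℝ) (hf : ∀ k ≤ n, ∀ u ∈ U, DifferentiableAt ℝ (f k) u)
    (F : ℝ → ℝ)
    (hF₁ : ∀ u ∈ U, DifferentiableAt ℝ F u)
    (hF₂ : ∀ u ∈ U, DifferentiableAt ℝ (deriv F) u)
    (hF₃ : ∀ u ∈ U, DifferentiableAt ℝ (deriv (deriv F)) u)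
    (hfn : ∀ u ∈ U, f n u ≠ 0)
    (hFne : ∀ u ∈ U, F u ≠ 0)
    (hF' : ∀ u ∈ U, deriv F u = |f n u| ^ ((1 : ℝ) / ((n : ℝ) - 1))) :
    ((∀ u ∈ U, deriv (f 0) u * gFun n F u - f 0 u * deriv (gFun n F) u + 2 * f 0 u = 0) ∧
     (∀ u ∈ U, deriv (f 1) u * gFun n F u + f 1 u = 0) ∧
     (∀ u ∈ U, -(deriv (deriv (gFun n F)) u) + deriv (f 2) u * gFun n F u
        + f 2 u * deriv (gFun n F) u = 0) ∧
     (∀ k : ℕ, 3 ≤ k → k ≤ n - 1 → ∀ u ∈ U,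
        deriv (f k) u * gFun n F u + ((k : ℝ) - 1) * f k u * deriv (gFun n F) u
          + (2 - (k : ℝ)) * f k u = 0)) ↔
      ∃ b' : ℕ → ℝ,
        (∀ k ≤ n, k ≠ 2 → ∀ u ∈ U,
          f k u = b' k * |F u| ^ ((((k : ℝ) - (n : ℝ)) / ((n : ℝ) - 2)))
            * (deriv F u) ^ ((k : ℤ) - 1)) ∧
        (∀ u ∈ U,
          f 2 u = b' 2 * deriv F u / F u - deriv (deriv F) u / deriv F u) := by
  have hn4 : (4 : ℝ) ≤ (n : ℝ) := by exact_mod_cast hn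
  have h1 : ((n : ℝ) - 1) ≠ 0 := by linarith
  have h2 : ((n : ℝ) - 2) ≠ 0 := by linarith
  have hQpos : ∀ u ∈ U, 0 < deriv F u := fun u hu => by
    rw [hF' u hu]; exact Real.rpow_pos_of_pos (abs_pos.2 (hfn u hu)) _
  have hQne : ∀ u ∈ U, deriv F u ≠ 0 := fun u hu => ne_of_gt (hQpos u hu)
  -- the first derivative of g
  set G1 : ℝ → ℝ := fun u => ((n : ℝ) - 2) / ((n : ℝ) - 1) *
      (1 - F u * deriv (deriv F) u / (deriv F u) ^ 2) with hG1def
  have hgderiv : ∀ u ∈ U, HasDerivAt (gFun n F) (G1 u) u := fun u hu =>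
    myG (hF₁ u hu) (hF₂ u hu) (hQne u hu) h1
  have hgd : ∀ u ∈ U, deriv (gFun n F) u = G1 u := fun u hu => (hgderiv u hu).deriv
  have hgval : ∀ u ∈ U, gFun n F u * (((n : ℝ) - 1) * deriv F u) = ((n : ℝ) - 2) * F u := by
    intro u hu
    unfold gFun
    exact div_mul_cancel₀ _ (mul_ne_zero h1 (hQne u hu))
  have hg'val : ∀ u ∈ U, deriv (gFun n F) u * (((n : ℝ) - 1) * (deriv F u) ^ 2)
      = ((n : ℝ) - 2) * ((deriv F u) ^ 2 - F u * deriv (deriv F) u) := by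
    intro u hu
    rw [hgd u hu, hG1def]
    field_simp [hQne u hu]
  -- second derivative of g
  have hG1deriv : ∀ u ∈ U, HasDerivAt G1
      (((n : ℝ) - 2) / ((n : ℝ) - 1) * (0 -
        ((deriv F u * deriv (deriv F) u + F u * deriv (deriv (deriv F)) u) * (deriv F u) ^ 2
          - F u * deriv (deriv F) u * (2 * deriv F u * deriv (deriv F) u)) / ((deriv F u) ^ 2) ^ 2)) u := by
    intro u hu
    have hc : HasDerivAt (fun x => F x * deriv (deriv F) x)
        (deriv F u * deriv (deriv F) u + F u * deriv (deriv (deriv F)) u) u :=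
      (hF₁ u hu).hasDerivAt.mul (hF₃ u hu).hasDerivAt
    have hd : HasDerivAt (fun x => (deriv F x) ^ 2)
        (2 * deriv F u * deriv (deriv F) u) u := by
      have := ((hF₂ u hu).hasDerivAt).pow 2
      refine HasDerivAt.congr_deriv this ?_
      norm_num
    have hdiv := hc.div hd (pow_ne_zero 2 (hQne u hu))
    have := ((hasDerivAt_const u (1 : ℝ)).sub hdiv).const_mul (((n : ℝ) - 2) / ((n : ℝ) - 1))
    exact HasDerivAt.congr_deriv this rfl
  have hevU : ∀ u ∈ U, ∀ᶠ x in nhds u, x ∈ U := fun u hu => hU.eventually_mem hu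
  have hDg : ∀ u ∈ U, HasDerivAt (deriv (gFun n F))
      (((n : ℝ) - 2) / ((n : ℝ) - 1) * (0 -
        ((deriv F u * deriv (deriv F) u + F u * deriv (deriv (deriv F)) u) * (deriv F u) ^ 2
          - F u * deriv (deriv F) u * (2 * deriv F u * deriv (deriv F) u)) / ((deriv F u) ^ 2) ^ 2)) u := by
    intro u hu
    refine (hG1deriv u hu).congr_of_eventuallyEq ?_
    filter_upwards [hevU u hu] with x hx
    exact hgd x hx
  -- (deriv F u) ^ (n-1) = |f n u|
  have hQn : ∀ u ∈ U, (deriv F u) ^ ((n : ℤ) - 1) = |f n u| := by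
    intro u hu
    have hcast : ((((n : ℤ) - 1) : ℤ) : ℝ) = (n : ℝ) - 1 := by push_cast; ring
    rw [hF' u hu, ← Real.rpow_intCast (|f n u| ^ ((1 : ℝ) / ((n : ℝ) - 1))) ((n : ℤ) - 1),
      hcast, ← Real.rpow_mul (abs_nonneg _), one_div, inv_mul_cancel₀ h1, Real.rpow_one]
  constructor
  · -- forward direction
    rintro ⟨hE0, hE1, hE2, hEk⟩
    rcases U.eq_empty_or_nonempty with hUe | ⟨u₀, hu₀⟩
    · exact ⟨fun _ => 0, fun k hk hk2 u hu => by simp [hUe] at hu, fun u hu => by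
        simp [hUe] at hu⟩
    have hODE : ∀ k : ℕ, k ≠ 2 → k ≤ n - 1 → ∀ u ∈ U,
        deriv (f k) u * gFun n F u + ((k : ℝ) - 1) * f k u * deriv (gFun n F) u
          + (2 - (k : ℝ)) * f k u = 0 := by
      intro k hk2 hkn u hu
      rcases k with _|_|_|m
      · have := hE0 u hu; push_cast; linarith
      · have := hE1 u hu; push_cast; linarith
      · exact absurd rfl hk2
      · exact hEk _ (by omega) hkn u hu
    have hconstW : ∀ k : ℕ, k ≠ 2 → k ≤ n - 1 → ∀ u ∈ U,
        f k u * (|F u| ^ (((n:ℝ) - (k:ℝ)) / ((n:ℝ) - 2)) * (deriv F u) ^ ((1:ℤ) - (k:ℤ)))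
          = f k u₀ * (|F u₀| ^ (((n:ℝ) - (k:ℝ)) / ((n:ℝ) - 2)) * (deriv F u₀) ^ ((1:ℤ) - (k:ℤ))) := by
      intro k hk2 hkn u hu
      have hkn' : k ≤ n := le_trans hkn (Nat.sub_le n 1)
      refine constOn hU hUc (w := fun x => f k x *
        (|F x| ^ (((n:ℝ) - (k:ℝ)) / ((n:ℝ) - 2)) * (deriv F x) ^ ((1:ℤ) - (k:ℤ)))) ?_ hu hu₀
      intro v hv
      have hmc : ((((1:ℤ) - (k:ℤ)) : ℤ) : ℝ) = 1 - (k : ℝ) := by push_cast; ring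
      have hΦ := myPhi (hF₁ v hv) (hF₂ v hv) (hFne v hv) (hQne v hv)
        (((n:ℝ) - (k:ℝ)) / ((n:ℝ) - 2)) ((1:ℤ) - (k:ℤ))
      rw [hmc] at hΦ
      have hw := ((hf k hkn' v hv).hasDerivAt).mul hΦ
      have hz := fwdKey (n:ℝ) (k:ℝ) (deriv (f k) v) (f k v) (F v) (deriv F v)
        (deriv (deriv F) v)
        (|F v| ^ (((n:ℝ) - (k:ℝ)) / ((n:ℝ) - 2)) * (deriv F v) ^ ((1:ℤ) - (k:ℤ)))
        (gFun n F v) (deriv (gFun n F) v)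
        (hFne v hv) (hQne v hv) h2 h1 (hgval v hv) (hg'val v hv) (hODE k hk2 hkn v hv)
      exact hz ▸ hw
    have hsgn : ∀ u ∈ U, 0 < f n u * f n u₀ := by
      intro u hu
      rcases lt_or_ge 0 (f n u * f n u₀) with h | h
      · exact h
      exfalso
      have hsub : Set.uIcc u u₀ ⊆ U := hUc.uIcc_subset hu hu₀
      have hcont : ContinuousOn (f n) (Set.uIcc u u₀) := fun x hx =>
        ((hf n le_rfl x (hsub hx)).continuousAt).continuousWithinAt
      have h0 : (0:ℝ) ∈ Set.uIcc (f n u) (f n u₀) := by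
        rcases mul_nonpos_iff.mp h with ⟨ha, hb⟩ | ⟨ha, hb⟩
        · exact Set.mem_uIcc.mpr (Or.inr ⟨hb, ha⟩)
        · exact Set.mem_uIcc.mpr (Or.inl ⟨ha, hb⟩)
      obtain ⟨c, hc, hc0⟩ := intermediate_value_uIcc hcont h0
      exact hfn c (hsub hc) hc0
    refine ⟨fun k => if k = 2 then
        ((f 2 u₀ * gFun n F u₀ - deriv (gFun n F) u₀) * ((n:ℝ) - 1) / ((n:ℝ) - 2) + 1)
      else f k u₀ * (|F u₀| ^ (((n:ℝ) - (k:ℝ)) / ((n:ℝ) - 2)) * (deriv F u₀) ^ ((1:ℤ) - (k:ℤ))),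
      fun k hkn hk2 u hu => ?_, fun u hu => ?_⟩
    · simp only [if_neg hk2]
      rcases eq_or_ne k n with rfl | hkne
      · rw [show ((k:ℝ) - (k:ℝ)) / ((k:ℝ) - 2) = 0 by ring]
        simp only [Real.rpow_zero, mul_one, one_mul]
        rw [show (1:ℤ) - (k:ℤ) = -((k:ℤ) - 1) by ring, zpow_neg, hQn u hu, hQn u₀ hu₀]
        have hne0 := hfn u₀ hu₀
        rcases lt_or_ge 0 (f k u₀) with hpos | hneg
        · have hposu : 0 < f k u := by nlinarith [hsgn u hu]
          rw [abs_of_pos hpos, abs_of_pos hposu]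
          field_simp
        · have hneg' : f k u₀ < 0 := lt_of_le_of_ne hneg hne0
          have hnegu : f k u < 0 := by nlinarith [hsgn u hu]
          rw [abs_of_neg hneg', abs_of_neg hnegu]
          field_simp
      · have hkn1 : k ≤ n - 1 := by omega
        have hc := hconstW k hk2 hkn1 u hu
        rw [show ((k:ℝ) - (n:ℝ)) / ((n:ℝ) - 2) = -(((n:ℝ) - (k:ℝ)) / ((n:ℝ) - 2)) by ring,
          show (k:ℤ) - 1 = -((1:ℤ) - (k:ℤ)) by ring, Real.rpow_neg (abs_nonneg _), zpow_neg,
          ← hc]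
        have hX : |F u| ^ (((n:ℝ) - (k:ℝ)) / ((n:ℝ) - 2)) ≠ 0 :=
          ne_of_gt (Real.rpow_pos_of_pos (abs_pos.2 (hFne u hu)) _)
        have hY : (deriv F u) ^ ((1:ℤ) - (k:ℤ)) ≠ 0 := zpow_ne_zero _ (hQne u hu)
        field_simp
    · simp only [if_pos]
      have hwd : ∀ v ∈ U, HasDerivAt (fun x => f 2 x * gFun n F x - deriv (gFun n F) x) 0 v := by
        intro v hv
        have h2n : (2:ℕ) ≤ n := by omega
        have hmul := ((hf 2 h2n v hv).hasDerivAt).mul (hgderiv v hv)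
        have hsub := hmul.sub (hDg v hv)
        refine HasDerivAt.congr_deriv hsub ?_
        have hE := hE2 v hv
        rw [(hDg v hv).deriv, hgd v hv] at hE
        linarith [hE]
      have hcw := constOn hU hUc hwd hu hu₀
      exact fwd2Key (n:ℝ) _ (f 2 u) (F u) (deriv F u) (deriv (deriv F) u)
        (gFun n F u) (deriv (gFun n F) u) (hFne u hu) (hQne u hu) h2 h1
        (hgval u hu) (hg'val u hu) hcw
  · -- backward direction
    rintro ⟨b', hb, hb2⟩
    have hEgen : ∀ k : ℕ, k ≠ 2 → k ≤ n - 1 → ∀ u ∈ U,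
        deriv (f k) u * gFun n F u + ((k : ℝ) - 1) * f k u * deriv (gFun n F) u
          + (2 - (k : ℝ)) * f k u = 0 := by
      intro k hk2 hkn u hu
      have hkn' : k ≤ n := le_trans hkn (Nat.sub_le n 1)
      have hmc : ((((k:ℤ) - 1) : ℤ) : ℝ) = (k : ℝ) - 1 := by push_cast; ring
      have hΦ := myPhi (hF₁ u hu) (hF₂ u hu) (hFne u hu) (hQne u hu)
        (((k:ℝ) - (n:ℝ)) / ((n:ℝ) - 2)) ((k:ℤ) - 1)
      rw [hmc] at hΦ
      have hder : HasDerivAt (f k)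
          (b' k * (|F u| ^ (((k:ℝ) - (n:ℝ)) / ((n:ℝ) - 2)) * (deriv F u) ^ ((k:ℤ) - 1) *
            ((((k:ℝ) - (n:ℝ)) / ((n:ℝ) - 2)) * deriv F u / F u
              + ((k:ℝ) - 1) * deriv (deriv F) u / deriv F u))) u := by
        refine (hΦ.const_mul (b' k)).congr_of_eventuallyEq ?_
        filter_upwards [hevU u hu] with x hx
        rw [hb k hkn' hk2 x hx]; ring
      rw [hder.deriv, hb k hkn' hk2 u hu, hgd u hu]
      simp only [hG1def]
      unfold gFun
      have hbk := backKey ((n:ℝ)) ((k:ℝ)) (b' k) (F u) (deriv F u) (deriv (deriv F) u)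
        (|F u| ^ (((k:ℝ) - (n:ℝ)) / ((n:ℝ) - 2)) * (deriv F u) ^ ((k:ℤ) - 1))
        (hFne u hu) (hQne u hu) h2 h1
      linear_combination hbk
    refine ⟨fun u hu => ?_, fun u hu => ?_, fun u hu => ?_, fun k hk3 hkn u hu => ?_⟩
    · have := hEgen 0 (by omega) (by omega) u hu
      push_cast at this; linarith
    · have := hEgen 1 (by omega) (by omega) u hu
      push_cast at this; linarith
    · -- E2
      have hd2 : HasDerivAt (f 2)
          ((b' 2 * deriv (deriv F) u * F u - b' 2 * deriv F u * deriv F u) / F u ^ 2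
            - (deriv (deriv (deriv F)) u * deriv F u - deriv (deriv F) u * deriv (deriv F) u)
              / deriv F u ^ 2) u := by
        have ha : HasDerivAt (fun x => b' 2 * deriv F x / F x)
            ((b' 2 * deriv (deriv F) u * F u - b' 2 * deriv F u * deriv F u) / F u ^ 2) u :=
          ((hF₂ u hu).hasDerivAt.const_mul (b' 2)).div (hF₁ u hu).hasDerivAt (hFne u hu)
        have hbb : HasDerivAt (fun x => deriv (deriv F) x / deriv F x)
            ((deriv (deriv (deriv F)) u * deriv F u - deriv (deriv F) u * deriv (deriv F) u)
              / deriv F u ^ 2) u :=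
          (hF₃ u hu).hasDerivAt.div (hF₂ u hu).hasDerivAt (hQne u hu)
        refine (ha.sub hbb).congr_of_eventuallyEq ?_
        filter_upwards [hevU u hu] with x hx
        rw [hb2 x hx]; rfl
      rw [(hDg u hu).deriv, hd2.deriv, hb2 u hu, hgd u hu]
      simp only [hG1def]
      unfold gFun
      have hb2k := back2Key (n:ℝ) (b' 2) (F u) (deriv F u) (deriv (deriv F) u)
        (deriv (deriv (deriv F)) u) (hFne u hu) (hQne u hu) h2 h1
      linear_combination hb2k
    · exact hEgen k (by omega) hkn u hu
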